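/- A geometric theory T over a signature Σ is (syntactically equivalent to) a coherent theory if and only if the following compactness condition holds: for every coherent formula φ(x⃗) over Σ and every family {ψ_i(x⃗) : i ∈ I} of geometric formulas in the same context, if φ ⊢_x⃗ ⋁_{i∈I} ψ_i is provable in T then φ ⊢_x⃗ ⋁_{i∈I'} ψ_i is provable in T for some finite subset I' ⊆ I. -/

import Mathlib

universe u

/-- A (multi-sorted) first-order signature. -/
structure GeomSignature : Type (u + 1) where
  Sorts : Type u
  Funcs : Type u
  domF : Funcs → List Sorts
  codF : Funcs → Sorts
  Rels : Type u
  domR : Rels → List Sorts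

variable {S : GeomSignature.{u}}

/-- A context: a type of variables together with a sort for each variable. -/
structure Ctx (S : GeomSignature.{u}) : Type (u + 1) where
  Var : Type u
  sortOf : Var → S.Sorts

/-- Extend a context by a fresh variable of sort `A`. -/
@[reducible] def Ctx.cons (A : S.Sorts) (Γ : Ctx S) : Ctx S :=
  ⟨Option Γ.Var, fun v => match v with | none => A | some w => Γ.sortOf w⟩

/-- The empty context. -/
def Ctx.nil (S : GeomSignature.{u}) : Ctx S := ⟨PEmpty, fun v => v.elim⟩

/-- Terms over a signature in a context, indexed by their sort. -/
inductive Term (S : GeomSignature.{u}) : Ctx S → S.Sorts → Type (u + 1)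
  | var {Γ : Ctx S} (v : Γ.Var) : Term S Γ (Γ.sortOf v)
  | func {Γ : Ctx S} (f : S.Funcs)
      (args : ∀ i : Fin (S.domF f).length, Term S Γ ((S.domF f).get i)) :
      Term S Γ (S.codF f)

/-- A substitution from context `Γ` to context `Δ`. -/
abbrev Subst (S : GeomSignature.{u}) (Γ Δ : Ctx S) : Type (u + 1) :=
  ∀ v : Γ.Var, Term S Δ (Γ.sortOf v)

/-- Substitution acting on terms. -/
def Term.subst {Γ Δ : Ctx S} (σ : Subst S Γ Δ) : ∀ {A}, Term S Γ A → Term S Δ A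
  | _, .var v => σ v
  | _, .func f args => .func f (fun i => (args i).subst σ)

/-- The weakening substitution `Γ → Γ.cons A`. -/
def Subst.wk (A : S.Sorts) {Γ : Ctx S} : Subst S Γ (Ctx.cons A Γ) :=
  fun v => Term.var (Γ := Ctx.cons A Γ) (some v)

/-- Lift a substitution to extended contexts. -/
def Subst.lift {Γ Δ : Ctx S} (σ : Subst S Γ Δ) (A : S.Sorts) :
    Subst S (Ctx.cons A Γ) (Ctx.cons A Δ) :=
  fun v => match v with
  | none => Term.var (Γ := Ctx.cons A Δ) none
  | some w => (σ w).subst (Subst.wk A)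

/-- The substitution `Γ.cons A → Γ` substituting the term `t` for the fresh variable. -/
def Subst.single {Γ : Ctx S} {A : S.Sorts} (t : Term S Γ A) : Subst S (Ctx.cons A Γ) Γ :=
  fun v => match v with
  | none => t
  | some w => Term.var w

/-- Infinitary geometric formulas over a signature: atomic formulas, equality, truth,
falsity, binary conjunction, set-indexed disjunction and existential quantification. -/
inductive Formula (S : GeomSignature.{u}) : Ctx S → Type (u + 1)
  | rel {Γ : Ctx S} (R : S.Rels)
      (args : ∀ i : Fin (S.domR R).length, Term S Γ ((S.domR R).get i)) : Formula S Γ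
  | eq {Γ : Ctx S} {A : S.Sorts} (t₁ t₂ : Term S Γ A) : Formula S Γ
  | true {Γ : Ctx S} : Formula S Γ
  | false {Γ : Ctx S} : Formula S Γ
  | conj {Γ : Ctx S} (φ ψ : Formula S Γ) : Formula S Γ
  | disj {Γ : Ctx S} (I : Type u) (φ : I → Formula S Γ) : Formula S Γ
  | ex {Γ : Ctx S} (A : S.Sorts) (φ : Formula S (Ctx.cons A Γ)) : Formula S Γ

/-- Substitution acting on formulas. -/
def Formula.subst : ∀ {Γ Δ : Ctx S}, Subst S Γ Δ → Formula S Γ → Formula S Δ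
  | _, _, σ, .rel R args => .rel R (fun i => (args i).subst σ)
  | _, _, σ, .eq t₁ t₂ => .eq (t₁.subst σ) (t₂.subst σ)
  | _, _, _, .true => .true
  | _, _, _, .false => .false
  | _, _, σ, .conj φ ψ => Formula.conj (Formula.subst σ φ) (Formula.subst σ ψ)
  | _, _, σ, .disj I φ => .disj I (fun i => Formula.subst σ (φ i))
  | _, _, σ, .ex A φ => .ex A (Formula.subst (σ.lift A) φ)

/-- A sequent `φ ⊢_Γ ψ` between geometric formulas in a common context. -/
structure GeomSequent (S : GeomSignature.{u}) : Type (u + 1) where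
  ctx : Ctx S
  lhs : Formula S ctx
  rhs : Formula S ctx

/-- A theory: a set of sequents (its axioms). -/
abbrev GeomTheory (S : GeomSignature.{u}) : Type (u + 1) := Set (GeomSequent S)

/-- Provability of sequents from a theory `T`, in the standard (intuitionistic) sequent
calculus of geometric logic, where the index types of disjunctions occurring in the
disjunction rules are restricted by the predicate `Adm` (taking `Adm = fun _ => True`
gives geometric logic, `Adm = fun I => Finite I` gives coherent logic). -/
inductive Provable (Adm : Type u → Prop) (T : GeomTheory S) : GeomSequent S → Prop
  | ax {s : GeomSequent S} : s ∈ T → Provable Adm T s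
  | id {Γ : Ctx S} (φ : Formula S Γ) : Provable Adm T ⟨Γ, φ, φ⟩
  | cut {Γ : Ctx S} {φ ψ χ : Formula S Γ} :
      Provable Adm T ⟨Γ, φ, ψ⟩ → Provable Adm T ⟨Γ, ψ, χ⟩ → Provable Adm T ⟨Γ, φ, χ⟩
  | subst {Γ Δ : Ctx S} (σ : Subst S Γ Δ) {φ ψ : Formula S Γ} :
      Provable Adm T ⟨Γ, φ, ψ⟩ → Provable Adm T ⟨Δ, φ.subst σ, ψ.subst σ⟩
  | trueIntro {Γ : Ctx S} (φ : Formula S Γ) : Provable Adm T ⟨Γ, φ, .true⟩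
  | falseElim {Γ : Ctx S} (φ : Formula S Γ) : Provable Adm T ⟨Γ, .false, φ⟩
  | conjIntro {Γ : Ctx S} {φ ψ χ : Formula S Γ} :
      Provable Adm T ⟨Γ, φ, ψ⟩ → Provable Adm T ⟨Γ, φ, χ⟩ → Provable Adm T ⟨Γ, φ, .conj ψ χ⟩
  | conjElimL {Γ : Ctx S} (φ ψ : Formula S Γ) : Provable Adm T ⟨Γ, .conj φ ψ, φ⟩
  | conjElimR {Γ : Ctx S} (φ ψ : Formula S Γ) : Provable Adm T ⟨Γ, .conj φ ψ, ψ⟩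
  | disjIntro {Γ : Ctx S} {I : Type u} (hI : Adm I) (φ : I → Formula S Γ) (i : I) :
      Provable Adm T ⟨Γ, φ i, .disj I φ⟩
  | disjElim {Γ : Ctx S} {I : Type u} (hI : Adm I) {φ : I → Formula S Γ} {ψ : Formula S Γ} :
      (∀ i : I, Provable Adm T ⟨Γ, φ i, ψ⟩) → Provable Adm T ⟨Γ, .disj I φ, ψ⟩
  | distrib {Γ : Ctx S} {I : Type u} (hI : Adm I) (φ : Formula S Γ) (ψ : I → Formula S Γ) :
      Provable Adm T ⟨Γ, .conj φ (.disj I ψ), .disj I (fun i => .conj φ (ψ i))⟩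
  | exAdj₁ {Γ : Ctx S} {A : S.Sorts} {φ : Formula S (Ctx.cons A Γ)} {ψ : Formula S Γ} :
      Provable Adm T ⟨Ctx.cons A Γ, φ, ψ.subst (Subst.wk A)⟩ → Provable Adm T ⟨Γ, .ex A φ, ψ⟩
  | exAdj₂ {Γ : Ctx S} {A : S.Sorts} {φ : Formula S (Ctx.cons A Γ)} {ψ : Formula S Γ} :
      Provable Adm T ⟨Γ, .ex A φ, ψ⟩ → Provable Adm T ⟨Ctx.cons A Γ, φ, ψ.subst (Subst.wk A)⟩
  | frobenius {Γ : Ctx S} {A : S.Sorts} (φ : Formula S Γ) (ψ : Formula S (Ctx.cons A Γ)) :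
      Provable Adm T ⟨Γ, .conj φ (.ex A ψ), .ex A (.conj (φ.subst (Subst.wk A)) ψ)⟩
  | eqRefl {Γ : Ctx S} {A : S.Sorts} (t : Term S Γ A) : Provable Adm T ⟨Γ, .true, .eq t t⟩
  | eqSubst {Γ : Ctx S} {A : S.Sorts} (t u : Term S Γ A) (φ : Formula S (Ctx.cons A Γ)) :
      Provable Adm T ⟨Γ, .conj (.eq t u) (φ.subst (Subst.single t)), φ.subst (Subst.single u)⟩

/-- Provability in geometric logic (arbitrary disjunctions allowed). -/
def GeomProvable (T : GeomTheory S) (s : GeomSequent S) : Prop :=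
  Provable (fun _ => True) T s

/-- Provability in coherent logic (only finite disjunctions allowed). -/
def CohProvable (T : GeomTheory S) (s : GeomSequent S) : Prop :=
  Provable (fun I => Finite I) T s

/-- Coherent formulas: geometric formulas all of whose disjunctions are finite. -/
inductive Formula.IsCoherent : ∀ {Γ : Ctx S}, Formula S Γ → Prop
  | rel {Γ : Ctx S} (R : S.Rels) (args) : (Formula.rel (Γ := Γ) R args).IsCoherent
  | eq {Γ : Ctx S} {A : S.Sorts} (t₁ t₂ : Term S Γ A) : (Formula.eq t₁ t₂).IsCoherent
  | true {Γ : Ctx S} : (Formula.true (Γ := Γ)).IsCoherent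
  | false {Γ : Ctx S} : (Formula.false (Γ := Γ)).IsCoherent
  | conj {Γ : Ctx S} {φ ψ : Formula S Γ} : φ.IsCoherent → ψ.IsCoherent → (φ.conj ψ).IsCoherent
  | disj {Γ : Ctx S} {I : Type u} (hI : Finite I) {φ : I → Formula S Γ} :
      (∀ i, (φ i).IsCoherent) → (Formula.disj I φ).IsCoherent
  | ex {Γ : Ctx S} {A : S.Sorts} {φ : Formula S (Ctx.cons A Γ)} :
      φ.IsCoherent → (φ.ex (A := A)).IsCoherent

/-- A coherent sequent: both sides are coherent formulas. -/
def GeomSequent.IsCoherent (s : GeomSequent S) : Prop :=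
  s.lhs.IsCoherent ∧ s.rhs.IsCoherent

/-- A coherent theory: all axioms are coherent sequents. -/
def GeomTheory.IsCoherent (T : GeomTheory S) : Prop :=
  ∀ s ∈ T, GeomSequent.IsCoherent s


section Aux
variable {S : GeomSignature.{u}}

/-- Binary disjunction via `ULift Bool`. -/
def or2 {Γ : Ctx S} (φ ψ : Formula S Γ) : Formula S Γ :=
  .disj (ULift Bool) (fun b => cond b.down φ ψ)

/-- Finite disjunction of a list of formulas. -/
def listDisj {Γ : Ctx S} : List (Formula S Γ) → Formula S Γ
  | [] => .false
  | φ :: L => or2 φ (listDisj L)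

/-- Convenience: geometric provability of a sequent. -/
abbrev PV (T : GeomTheory S) {Γ : Ctx S} (φ ψ : Formula S Γ) : Prop :=
  GeomProvable T ⟨Γ, φ, ψ⟩

variable {T : GeomTheory S} {Γ : Ctx S}

theorem PV.id {φ : Formula S Γ} : PV T φ φ := Provable.id φ

theorem PV.trans {φ ψ χ : Formula S Γ} (h₁ : PV T φ ψ) (h₂ : PV T ψ χ) : PV T φ χ :=
  Provable.cut h₁ h₂

theorem or2_inl {φ ψ : Formula S Γ} : PV T φ (or2 φ ψ) :=
  Provable.disjIntro (I := ULift Bool) trivial (fun b => cond b.down φ ψ) ⟨Bool.true⟩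

theorem or2_inr {φ ψ : Formula S Γ} : PV T ψ (or2 φ ψ) :=
  Provable.disjIntro (I := ULift Bool) trivial (fun b => cond b.down φ ψ) ⟨Bool.false⟩

theorem or2_elim {φ ψ χ : Formula S Γ} (h₁ : PV T φ χ) (h₂ : PV T ψ χ) :
    PV T (or2 φ ψ) χ := by
  refine Provable.disjElim trivial (fun b => ?_)
  rcases b with ⟨_ | _⟩
  · exact h₂
  · exact h₁

theorem or2_mono {φ ψ φ' ψ' : Formula S Γ} (h₁ : PV T φ φ') (h₂ : PV T ψ ψ') :
    PV T (or2 φ ψ) (or2 φ' ψ') :=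
  or2_elim (h₁.trans or2_inl) (h₂.trans or2_inr)

theorem listDisj_mem {L : List (Formula S Γ)} {d : Formula S Γ} (h : d ∈ L) :
    PV T d (listDisj L) := by
  induction L with
  | nil => cases h
  | cons a L ih =>
    rcases List.mem_cons.mp h with rfl | h
    · exact or2_inl
    · exact (ih h).trans or2_inr

theorem listDisj_elim {L : List (Formula S Γ)} {χ : Formula S Γ}
    (h : ∀ d ∈ L, PV T d χ) : PV T (listDisj L) χ := by
  induction L with
  | nil => exact Provable.falseElim χ
  | cons a L ih =>
    exact or2_elim (h a (List.mem_cons_self)) (ih fun d hd => h d (List.mem_cons_of_mem _ hd))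

theorem listDisj_mono {L₁ L₂ : List (Formula S Γ)} (h : ∀ d ∈ L₁, d ∈ L₂) :
    PV T (listDisj L₁) (listDisj L₂) :=
  listDisj_elim fun d hd => listDisj_mem (h d hd)

theorem conj_mono {φ ψ φ' ψ' : Formula S Γ} (h₁ : PV T φ φ') (h₂ : PV T ψ ψ') :
    PV T (.conj φ ψ) (.conj φ' ψ') :=
  Provable.conjIntro ((Provable.conjElimL φ ψ).cut h₁) ((Provable.conjElimR φ ψ).cut h₂)

theorem conj_comm {φ ψ : Formula S Γ} : PV T (.conj φ ψ) (.conj ψ φ) :=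
  Provable.conjIntro (Provable.conjElimR φ ψ) (Provable.conjElimL φ ψ)

theorem disj_elim' {I : Type u} {f : I → Formula S Γ} {χ : Formula S Γ}
    (h : ∀ i, PV T (f i) χ) : PV T (.disj I f) χ :=
  Provable.disjElim trivial h

theorem disj_intro' {I : Type u} (f : I → Formula S Γ) (i : I) : PV T (f i) (.disj I f) :=
  Provable.disjIntro trivial f i

/-- Distribution over a binary disjunction. -/
theorem conj_or2_distrib {φ a b : Formula S Γ} :
    PV T (.conj φ (or2 a b)) (or2 (.conj φ a) (.conj φ b)) := by
  refine (Provable.distrib trivial φ _).cut ?_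
  refine disj_elim' (fun c => ?_)
  rcases c with ⟨_ | _⟩
  · exact or2_inr
  · exact or2_inl

theorem conj_listDisj_elim {φ χ : Formula S Γ} {L : List (Formula S Γ)}
    (h : ∀ e ∈ L, PV T (.conj φ e) χ) : PV T (.conj φ (listDisj L)) χ := by
  induction L with
  | nil => exact (Provable.conjElimR φ _).cut (Provable.falseElim χ)
  | cons a L ih =>
    refine (conj_or2_distrib (a := a) (b := listDisj L)).cut ?_
    exact or2_elim (h a (List.mem_cons_self)) (ih fun e he => h e (List.mem_cons_of_mem _ he))

theorem listDisj_conj_elim {φ χ : Formula S Γ} {L : List (Formula S Γ)}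
    (h : ∀ e ∈ L, PV T (.conj e φ) χ) : PV T (.conj (listDisj L) φ) χ :=
  conj_comm.trans (conj_listDisj_elim fun e he => conj_comm.trans (h e he))

theorem ex_mono {A : S.Sorts} {φ ψ : Formula S (Ctx.cons A Γ)} (h : PV T φ ψ) :
    PV T (.ex A φ) (.ex A ψ) :=
  Provable.exAdj₁ (h.cut (Provable.exAdj₂ (Provable.id (.ex A ψ))))

theorem to_ex_subst_wk {A : S.Sorts} {φ : Formula S (Ctx.cons A Γ)} :
    PV T φ ((Formula.ex A φ).subst (Subst.wk A)) :=
  Provable.exAdj₂ (Provable.id (.ex A φ))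

end Aux

section Approx
variable {S : GeomSignature.{u}}

/-- `Approx φ c` : `c` is a canonical coherent approximation (basic disjunct) of `φ`. -/
inductive Approx : ∀ {Γ : Ctx S}, Formula S Γ → Formula S Γ → Prop
  | rel {Γ : Ctx S} (R : S.Rels) (a) : Approx (Formula.rel (Γ := Γ) R a) (.rel R a)
  | eq {Γ : Ctx S} {A : S.Sorts} (t u : Term S Γ A) : Approx (.eq t u) (.eq t u)
  | true {Γ : Ctx S} : Approx (Formula.true (Γ := Γ)) .true
  | false {Γ : Ctx S} : Approx (Formula.false (Γ := Γ)) .false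
  | conj {Γ : Ctx S} {φ ψ c d : Formula S Γ} :
      Approx φ c → Approx ψ d → Approx (.conj φ ψ) (.conj c d)
  | disjNil {Γ : Ctx S} {I : Type u} {f : I → Formula S Γ} : Approx (.disj I f) .false
  | disjCons {Γ : Ctx S} {I : Type u} {f : I → Formula S Γ} (i : I) {c d : Formula S Γ} :
      Approx (f i) c → Approx (.disj I f) d → Approx (.disj I f) (or2 c d)
  | ex {Γ : Ctx S} {A : S.Sorts} {φ c : Formula S (Ctx.cons A Γ)} :
      Approx φ c → Approx (.ex A φ) (.ex A c)

variable {T : GeomTheory S} {Γ : Ctx S}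

theorem Approx.sound {φ c : Formula S Γ} (h : Approx φ c) : PV T c φ := by
  induction h with
  | rel R a => exact PV.id
  | eq t u => exact PV.id
  | true => exact PV.id
  | false => exact PV.id
  | conj _ _ ih₁ ih₂ => exact conj_mono ih₁ ih₂
  | disjNil => exact Provable.falseElim _
  | disjCons i _ _ ih₁ ih₂ => exact or2_elim (ih₁.trans (disj_intro' _ i)) ih₂
  | ex _ ih => exact ex_mono ih

theorem Approx.coherent {φ c : Formula S Γ} (h : Approx φ c) : c.IsCoherent := by
  induction h with
  | rel R a => exact .rel R a
  | eq t u => exact .eq t u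
  | true => exact .true
  | false => exact .false
  | conj _ _ ih₁ ih₂ => exact .conj ih₁ ih₂
  | disjNil => exact .false
  | disjCons i _ _ ih₁ ih₂ =>
    refine .disj inferInstance (fun b => ?_)
    rcases b with ⟨_ | _⟩
    · exact ih₂
    · exact ih₁
  | ex _ ih => exact .ex ih

theorem or2_subst {Γ Δ : Ctx S} (σ : Subst S Γ Δ) (φ ψ : Formula S Γ) :
    (or2 φ ψ).subst σ = or2 (φ.subst σ) (ψ.subst σ) := by
  show Formula.disj _ _ = Formula.disj _ _
  congr 1
  funext b
  rcases b with ⟨_ | _⟩ <;> rfl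

theorem listDisj_subst {Γ Δ : Ctx S} (σ : Subst S Γ Δ) (L : List (Formula S Γ)) :
    (listDisj L).subst σ = listDisj (L.map (Formula.subst σ)) := by
  induction L with
  | nil => rfl
  | cons a L ih => simp [listDisj, or2_subst, ih]

theorem Approx.subst {Γ Δ : Ctx S} {φ c : Formula S Γ} (h : Approx φ c) (σ : Subst S Γ Δ) :
    Approx (φ.subst σ) (c.subst σ) := by
  induction h generalizing Δ with
  | rel R a => exact .rel R _
  | eq t u => exact .eq _ _
  | true => exact .true
  | false => exact .false
  | conj _ _ ih₁ ih₂ => exact .conj (ih₁ σ) (ih₂ σ)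
  | disjNil => exact .disjNil
  | disjCons i _ _ ih₁ ih₂ => rw [or2_subst]; exact .disjCons i (ih₁ σ) (ih₂ σ)
  | ex _ ih => exact .ex (ih _)

theorem Approx.subst_inv {Δ : Ctx S} {ξ c : Formula S Δ} (h : Approx ξ c) :
    ∀ {Γ : Ctx S} {φ : Formula S Γ} {σ : Subst S Γ Δ}, ξ = φ.subst σ →
      ∃ c₀, Approx φ c₀ ∧ c = c₀.subst σ := by
  induction h with
  | rel R a =>
    intro Γ φ σ hφ
    cases φ <;> simp only [Formula.subst] at hφ
    case rel R' a' => exact ⟨_, .rel R' a', hφ⟩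
    all_goals cases hφ
  | eq t u =>
    intro Γ φ σ hφ
    cases φ <;> simp only [Formula.subst] at hφ
    case eq t' u' => exact ⟨_, .eq t' u', hφ⟩
    all_goals cases hφ
  | true =>
    intro Γ φ σ hφ
    cases φ <;> simp only [Formula.subst] at hφ
    case true => exact ⟨_, .true, rfl⟩
    all_goals cases hφ
  | false =>
    intro Γ φ σ hφ
    cases φ <;> simp only [Formula.subst] at hφ
    case false => exact ⟨_, .false, rfl⟩
    all_goals cases hφ
  | conj h₁ h₂ ih₁ ih₂ =>
    intro Γ φ σ hφ
    cases φ <;> simp only [Formula.subst] at hφ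
    case conj φ₁ φ₂ =>
      injection hφ with hΓ e₁ e₂
      obtain ⟨c₁, hc₁, rfl⟩ := ih₁ e₁
      obtain ⟨c₂, hc₂, rfl⟩ := ih₂ e₂
      exact ⟨.conj c₁ c₂, .conj hc₁ hc₂, rfl⟩
    all_goals cases hφ
  | disjNil =>
    intro Γ φ σ hφ
    cases φ <;> simp only [Formula.subst] at hφ
    case disj I₀ f₀ => exact ⟨.false, .disjNil, rfl⟩
    all_goals cases hφ
  | disjCons i h₁ h₂ ih₁ ih₂ =>
    intro Γ φ σ hφ
    cases φ <;> simp only [Formula.subst] at hφ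
    case disj I₀ f₀ =>
      injection hφ with hΓ hI hf
      subst hI
      have hf' := eq_of_heq hf
      subst hf'
      obtain ⟨c₁, hc₁, rfl⟩ := ih₁ (φ := f₀ i) rfl
      obtain ⟨c₂, hc₂, rfl⟩ := ih₂ (φ := .disj _ f₀) rfl
      exact ⟨or2 c₁ c₂, .disjCons i hc₁ hc₂, (or2_subst _ _ _).symm⟩
    all_goals cases hφ
  | ex h₁ ih =>
    intro Γ φ σ hφ
    cases φ <;> simp only [Formula.subst] at hφ
    case ex A₀ φ₀ =>
      injection hφ with hΓ hA hφ'
      subst hA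
      have hφ'' := eq_of_heq hφ'
      subst hφ''
      obtain ⟨c₁, hc₁, rfl⟩ := ih (φ := φ₀) rfl
      exact ⟨.ex _ c₁, .ex hc₁, rfl⟩
    all_goals cases hφ

end Approx

section Disj
variable {S : GeomSignature.{u}} {T : GeomTheory S} {Γ : Ctx S}

theorem approx_disj_of_list {I : Type u} {f : I → Formula S Γ} {L : List (Formula S Γ)}
    (h : ∀ d ∈ L, ∃ i, Approx (f i) d) : Approx (.disj I f) (listDisj L) := by
  induction L with
  | nil => exact .disjNil
  | cons a L ih =>
    obtain ⟨i, hi⟩ := h a (List.mem_cons_self)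
    exact .disjCons i hi (ih fun d hd => h d (List.mem_cons_of_mem _ hd))

theorem approx_disj_inv_aux {ξ c : Formula S Γ} (h : Approx ξ c) :
    ∀ {I : Type u} {f : I → Formula S Γ}, ξ = .disj I f →
      ∃ L, c = listDisj L ∧ ∀ d ∈ L, ∃ i, Approx (f i) d := by
  induction h with
  | disjNil => exact fun hξ => ⟨[], rfl, by simp⟩
  | disjCons i h₁ h₂ ih₁ ih₂ =>
    intro I f hξ
    injection hξ with hΓ hI hf
    subst hI
    have hf' := eq_of_heq hf
    subst hf'
    obtain ⟨L, rfl, hL⟩ := ih₂ rfl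
    refine ⟨_ :: L, rfl, ?_⟩
    intro d hd
    rcases List.mem_cons.mp hd with rfl | hd
    · exact ⟨i, h₁⟩
    · exact hL d hd
  | rel R a => intro _ _ hξ; cases hξ
  | eq t u => intro _ _ hξ; cases hξ
  | true => intro _ _ hξ; cases hξ
  | false => intro _ _ hξ; cases hξ
  | conj h₁ h₂ ih₁ ih₂ => intro _ _ hξ; cases hξ
  | ex h₁ ih => intro _ _ hξ; cases hξ

theorem approx_disj_inv {I : Type u} {f : I → Formula S Γ} {c : Formula S Γ}
    (h : Approx (.disj I f) c) :
    ∃ L, c = listDisj L ∧ ∀ d ∈ L, ∃ i, Approx (f i) d :=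
  approx_disj_inv_aux h rfl

theorem exists_premap {Δ : Ctx S} {σ : Subst S Γ Δ} {ψ : Formula S Γ} {L : List (Formula S Δ)}
    (h : ∀ d ∈ L, ∃ d₀, Approx ψ d₀ ∧ d = d₀.subst σ) :
    ∃ L₀ : List (Formula S Γ), (∀ d₀ ∈ L₀, Approx ψ d₀) ∧ L = L₀.map (Formula.subst σ) := by
  induction L with
  | nil => exact ⟨([] : List (Formula S Γ)), by simp, rfl⟩
  | cons a L ih =>
    obtain ⟨a₀, ha₀, rfl⟩ := h a (List.mem_cons_self)
    obtain ⟨L₀, hL₀, rfl⟩ := ih fun d hd => h d (List.mem_cons_of_mem _ hd)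
    refine ⟨a₀ :: L₀, ?_, rfl⟩
    intro d hd
    rcases List.mem_cons.mp hd with rfl | hd
    · exact ha₀
    · exact hL₀ d hd

/-- Finite canonical cover of a coherent formula. -/
theorem Formula.IsCoherent.finCover {φ : Formula S Γ} (h : φ.IsCoherent) :
    ∃ L, (∀ d ∈ L, Approx φ d) ∧ PV T φ (listDisj L) := by
  induction h with
  | rel R a => exact ⟨[.rel R a], by simpa using Approx.rel R a, listDisj_mem (by simp)⟩
  | eq t u => exact ⟨[.eq t u], by simpa using Approx.eq t u, listDisj_mem (by simp)⟩
  | true => exact ⟨[.true], by simpa using Approx.true, listDisj_mem (by simp)⟩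
  | false => exact ⟨[], by simp, PV.id⟩
  | conj h₁ h₂ ih₁ ih₂ =>
    obtain ⟨L₁, hL₁, hp₁⟩ := ih₁
    obtain ⟨L₂, hL₂, hp₂⟩ := ih₂
    refine ⟨(L₁.map (fun d => L₂.map (fun e => Formula.conj d e))).flatten, ?_, ?_⟩
    · intro d hd
      simp only [List.mem_flatten, List.mem_map] at hd
      obtain ⟨_, ⟨d₁, hd₁, rfl⟩, hm⟩ := hd
      obtain ⟨d₂, hd₂, rfl⟩ := List.mem_map.mp hm
      exact .conj (hL₁ d₁ hd₁) (hL₂ d₂ hd₂)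
    · refine (conj_mono hp₁ hp₂).trans (listDisj_conj_elim fun d hd => ?_)
      refine conj_listDisj_elim fun e he => listDisj_mem ?_
      simp only [List.mem_flatten, List.mem_map]
      exact ⟨_, ⟨d, hd, rfl⟩, List.mem_map_of_mem he⟩
  | disj hI hco ih =>
    choose g hg₁ hg₂ using ih
    haveI := @Fintype.ofFinite _ hI
    refine ⟨(Finset.univ.toList.map (fun i => (g i).map (fun d => or2 d .false))).flatten, ?_, ?_⟩
    · intro d hd
      simp only [List.mem_flatten, List.mem_map] at hd
      obtain ⟨_, ⟨i, _, rfl⟩, hm⟩ := hd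
      obtain ⟨d₀, hd₀, rfl⟩ := List.mem_map.mp hm
      exact .disjCons i (hg₁ i d₀ hd₀) .disjNil
    · refine disj_elim' fun i => (hg₂ i).trans (listDisj_elim fun d hd => ?_)
      refine (or2_inl (ψ := Formula.false)).trans (listDisj_mem ?_)
      simp only [List.mem_flatten, List.mem_map]
      exact ⟨_, ⟨i, by simp, rfl⟩, List.mem_map_of_mem hd⟩
  | ex h₁ ih =>
    obtain ⟨L₁, hL₁, hp₁⟩ := ih
    refine ⟨L₁.map (Formula.ex _), ?_, ?_⟩
    · intro d hd
      obtain ⟨d₀, hd₀, rfl⟩ := List.mem_map.mp hd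
      exact .ex (hL₁ d₀ hd₀)
    · refine Provable.exAdj₁ (hp₁.trans (listDisj_elim fun d hd => ?_))
      exact to_ex_subst_wk.trans
        (Provable.subst (Subst.wk _) (listDisj_mem (List.mem_map_of_mem hd)))

end Disj

section Good
variable {S : GeomSignature.{u}} {T : GeomTheory S} {Γ : Ctx S}

/-- `c` is provably below a finite disjunction of canonical approximations of `ψ`. -/
def ApproxTo (T : GeomTheory S) {Γ : Ctx S} (c ψ : Formula S Γ) : Prop :=
  ∃ L, (∀ d ∈ L, Approx ψ d) ∧ PV T c (listDisj L)

def GoodSeq (T : GeomTheory S) (s : GeomSequent S) : Prop :=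
  ∀ c, Approx s.lhs c → ApproxTo T c s.rhs

theorem approxTo_listDisj {L : List (Formula S Γ)} {ψ : Formula S Γ}
    (h : ∀ d ∈ L, ApproxTo T d ψ) : ApproxTo T (listDisj L) ψ := by
  induction L with
  | nil => exact ⟨[], by simp, PV.id⟩
  | cons a L ih =>
    obtain ⟨M₁, hM₁, hp₁⟩ := h a (List.mem_cons_self)
    obtain ⟨M₂, hM₂, hp₂⟩ := ih fun d hd => h d (List.mem_cons_of_mem _ hd)
    refine ⟨M₁ ++ M₂, ?_, ?_⟩
    · intro d hd
      rcases List.mem_append.mp hd with hd | hd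
      · exact hM₁ d hd
      · exact hM₂ d hd
    · exact or2_elim (hp₁.trans (listDisj_mono fun d hd => List.mem_append_left _ hd))
        (hp₂.trans (listDisj_mono fun d hd => List.mem_append_right _ hd))

theorem goodSeq_of_provable (hT : T.IsCoherent) {s : GeomSequent S}
    (h : GeomProvable T s) : GoodSeq T s := by
  induction h with
  | ax hs =>
    intro c hc
    obtain ⟨L, hL, hp⟩ := (hT _ hs).2.finCover (T := T)
    exact ⟨L, hL, (hc.sound.trans (Provable.ax hs)).trans hp⟩
  | id φ =>
    intro c hc
    exact ⟨[c], fun d hd => by obtain rfl := List.mem_singleton.mp hd; exact hc,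
      listDisj_mem (by simp)⟩
  | cut h₁ h₂ ih₁ ih₂ =>
    intro c hc
    obtain ⟨L, hL, hp⟩ := ih₁ c hc
    obtain ⟨M, hM, hq⟩ := approxTo_listDisj fun d hd => ih₂ d (hL d hd)
    exact ⟨M, hM, hp.trans hq⟩
  | subst σ h ih =>
    intro c hc
    obtain ⟨c₀, hc₀, rfl⟩ := hc.subst_inv rfl
    obtain ⟨L, hL, hp⟩ := ih c₀ hc₀
    refine ⟨L.map (Formula.subst σ), ?_, ?_⟩
    · intro d hd
      obtain ⟨d₀, hd₀, rfl⟩ := List.mem_map.mp hd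
      exact (hL d₀ hd₀).subst σ
    · rw [← listDisj_subst]
      exact Provable.subst σ hp
  | trueIntro φ =>
    intro c hc
    exact ⟨[.true], fun d hd => by obtain rfl := List.mem_singleton.mp hd; exact .true,
      (Provable.trueIntro c).cut (listDisj_mem (by simp))⟩
  | falseElim φ =>
    intro c hc
    cases hc with
    | false => exact ⟨[], by simp, PV.id⟩
  | conjIntro h₁ h₂ ih₁ ih₂ =>
    intro c hc
    obtain ⟨L₁, hL₁, hp₁⟩ := ih₁ c hc
    obtain ⟨L₂, hL₂, hp₂⟩ := ih₂ c hc
    refine ⟨(L₁.map (fun d => L₂.map (fun e => Formula.conj d e))).flatten, ?_, ?_⟩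
    · intro d hd
      simp only [List.mem_flatten, List.mem_map] at hd
      obtain ⟨_, ⟨d₁, hd₁, rfl⟩, hm⟩ := hd
      obtain ⟨d₂, hd₂, rfl⟩ := List.mem_map.mp hm
      exact .conj (hL₁ d₁ hd₁) (hL₂ d₂ hd₂)
    · refine (Provable.conjIntro hp₁ hp₂).cut (listDisj_conj_elim fun d hd => ?_)
      refine conj_listDisj_elim fun e he => listDisj_mem ?_
      simp only [List.mem_flatten, List.mem_map]
      exact ⟨_, ⟨d, hd, rfl⟩, List.mem_map_of_mem he⟩
  | conjElimL φ ψ =>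
    intro c hc
    cases hc with
    | conj h₁ h₂ =>
      exact ⟨[_], fun d hd => by obtain rfl := List.mem_singleton.mp hd; exact h₁,
        (Provable.conjElimL _ _).cut (listDisj_mem (by simp))⟩
  | conjElimR φ ψ =>
    intro c hc
    cases hc with
    | conj h₁ h₂ =>
      exact ⟨[_], fun d hd => by obtain rfl := List.mem_singleton.mp hd; exact h₂,
        (Provable.conjElimR _ _).cut (listDisj_mem (by simp))⟩
  | disjIntro _ f i =>
    intro c hc
    exact ⟨[or2 c .false],
      fun d hd => by obtain rfl := List.mem_singleton.mp hd; exact .disjCons i hc .disjNil,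
      (or2_inl (ψ := Formula.false)).trans (listDisj_mem (by simp))⟩
  | disjElim _ hs ih =>
    intro c hc
    obtain ⟨L, rfl, hL⟩ := approx_disj_inv hc
    refine approxTo_listDisj fun d hd => ?_
    obtain ⟨i, hi⟩ := hL d hd
    exact ih i d hi
  | distrib _ φ f =>
    intro c hc
    cases hc with
    | @conj _ _ _ c₁ c₂ h₁ h₂ =>
      obtain ⟨L, rfl, hL⟩ := approx_disj_inv h₂
      refine ⟨L.map (fun d => or2 (.conj c₁ d) .false), ?_, ?_⟩
      · intro d hd
        obtain ⟨d₀, hd₀, rfl⟩ := List.mem_map.mp hd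
        obtain ⟨i, hi⟩ := hL d₀ hd₀
        exact .disjCons i (.conj h₁ hi) .disjNil
      · exact conj_listDisj_elim fun d hd =>
          or2_inl.trans (listDisj_mem (List.mem_map_of_mem hd))
  | exAdj₁ h ih =>
    intro c hc
    cases hc with
    | ex h₁ =>
      obtain ⟨L, hL, hp⟩ := ih _ h₁
      obtain ⟨L₀, hL₀, rfl⟩ := exists_premap fun d hd => (hL d hd).subst_inv rfl
      rw [← listDisj_subst] at hp
      exact ⟨L₀, hL₀, Provable.exAdj₁ hp⟩
  | exAdj₂ h ih =>
    intro c hc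
    obtain ⟨L, hL, hp⟩ := ih _ (Approx.ex hc)
    refine ⟨L.map (Formula.subst (Subst.wk _)), ?_, ?_⟩
    · intro d hd
      obtain ⟨d₀, hd₀, rfl⟩ := List.mem_map.mp hd
      exact (hL d₀ hd₀).subst _
    · rw [← listDisj_subst]
      exact Provable.exAdj₂ hp
  | frobenius φ ψ =>
    intro c hc
    cases hc with
    | conj h₁ h₂ =>
      cases h₂ with
      | ex h₃ =>
        refine ⟨[.ex _ (.conj (Formula.subst (Subst.wk _) _) _)],
          fun d hd => by obtain rfl := List.mem_singleton.mp hd; exact .ex (.conj (h₁.subst _) h₃),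
          (Provable.frobenius _ _).cut (listDisj_mem (by simp))⟩
  | eqRefl t =>
    intro c hc
    cases hc with
    | true =>
      exact ⟨[.eq t t], fun d hd => by obtain rfl := List.mem_singleton.mp hd; exact .eq t t,
        (Provable.eqRefl t).cut (listDisj_mem (by simp))⟩
  | eqSubst t u φ =>
    intro c hc
    cases hc with
    | conj h₁ h₂ =>
      cases h₁ with
      | eq =>
        obtain ⟨c₀, hc₀, rfl⟩ := h₂.subst_inv rfl
        exact ⟨[c₀.subst (Subst.single u)],
          fun d hd => by obtain rfl := List.mem_singleton.mp hd; exact hc₀.subst _,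
          (Provable.eqSubst t u c₀).cut (listDisj_mem (by simp))⟩

end Good

section Compact
variable {S : GeomSignature.{u}} {T : GeomTheory S} {Γ : Ctx S}

theorem disjSub_mono {I : Type u} {f : I → Formula S Γ} {J J' : Finset I} (h : J ⊆ J') :
    PV T (.disj {i // i ∈ J} (fun i => f i.1)) (.disj {i // i ∈ J'} (fun i => f i.1)) :=
  disj_elim' fun x => disj_intro' (fun i : {i // i ∈ J'} => f i.1) ⟨x.1, h x.2⟩

theorem listDisj_disjSub {I : Type u} {f : I → Formula S Γ} {L : List (Formula S Γ)}
    (h : ∀ d ∈ L, ∃ J : Finset I, PV T d (.disj {i // i ∈ J} fun i => f i.1)) :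
    ∃ J : Finset I, PV T (listDisj L) (.disj {i // i ∈ J} fun i => f i.1) := by
  haveI := Classical.decEq I
  induction L with
  | nil => exact ⟨∅, Provable.falseElim _⟩
  | cons a L ih =>
    obtain ⟨J₁, hp₁⟩ := h a (List.mem_cons_self)
    obtain ⟨J₂, hp₂⟩ := ih fun d hd => h d (List.mem_cons_of_mem _ hd)
    exact ⟨J₁ ∪ J₂, or2_elim (hp₁.trans (disjSub_mono Finset.subset_union_left))
      (hp₂.trans (disjSub_mono Finset.subset_union_right))⟩

theorem approxTo_disj_finset {I : Type u} {f : I → Formula S Γ} {c : Formula S Γ}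
    (h : ApproxTo T c (.disj I f)) :
    ∃ J : Finset I, PV T c (.disj {i // i ∈ J} fun i => f i.1) := by
  obtain ⟨L, hL, hp⟩ := h
  have : ∀ d ∈ L, ∃ J : Finset I, PV T d (.disj {i // i ∈ J} fun i => f i.1) := by
    intro d hd
    obtain ⟨M, rfl, hM⟩ := approx_disj_inv (hL d hd)
    refine listDisj_disjSub fun e he => ?_
    obtain ⟨i, hi⟩ := hM e he
    refine ⟨{i}, hi.sound.trans ?_⟩
    exact disj_intro' (fun x : {x // x ∈ ({i} : Finset I)} => f x.1) ⟨i, Finset.mem_singleton_self i⟩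
  obtain ⟨J, hJ⟩ := listDisj_disjSub this
  exact ⟨J, hp.trans hJ⟩

/-- Compactness for coherent theories. -/
theorem coherent_compactness (hT : T.IsCoherent) {φ : Formula S Γ} (hφ : φ.IsCoherent)
    {I : Type u} {f : I → Formula S Γ} (h : PV T φ (.disj I f)) :
    ∃ J : Finset I, PV T φ (.disj {i // i ∈ J} fun i => f i.1) := by
  obtain ⟨L₀, hL₀, hp₀⟩ := hφ.finCover (T := T)
  have good := goodSeq_of_provable hT h
  obtain ⟨J, hJ⟩ := listDisj_disjSub fun c hc => approxTo_disj_finset (good c (hL₀ c hc))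
  exact ⟨J, hp₀.trans hJ⟩

end Compact

section Cover
variable {S : GeomSignature.{u}}

/-- Index type for the canonical coherent cover of a geometric formula. -/
def Formula.Idx : ∀ {Γ : Ctx S}, Formula S Γ → Type u
  | _, .rel _ _ => PUnit
  | _, .eq _ _ => PUnit
  | _, .true => PUnit
  | _, .false => PUnit
  | _, .conj φ ψ => φ.Idx × ψ.Idx
  | _, .disj I f => List ((i : I) × (f i).Idx)
  | _, .ex _ φ => φ.Idx

/-- The canonical coherent cover of a geometric formula. -/
def Formula.canon : ∀ {Γ : Ctx S} (φ : Formula S Γ), φ.Idx → Formula S Γ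
  | _, .rel R a, _ => .rel R a
  | _, .eq t u, _ => .eq t u
  | _, .true, _ => .true
  | _, .false, _ => .false
  | _, .conj φ ψ, c => .conj (φ.canon c.1) (ψ.canon c.2)
  | _, .disj _ f, l => listDisj (l.map fun p => (f p.1).canon p.2)
  | _, .ex A φ, c => .ex A (φ.canon c)

variable {T : GeomTheory S} {Γ : Ctx S}

theorem canon_approx : ∀ {Γ : Ctx S} (φ : Formula S Γ) (c : φ.Idx), Approx φ (φ.canon c) := by
  intro Γ φ
  induction φ with
  | rel R a => exact fun _ => .rel R a
  | eq t u => exact fun _ => .eq t u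
  | true => exact fun _ => .true
  | false => exact fun _ => .false
  | conj φ ψ ih₁ ih₂ => exact fun c => .conj (ih₁ c.1) (ih₂ c.2)
  | disj I f ih =>
    intro l
    refine approx_disj_of_list fun d hd => ?_
    obtain ⟨p, hp, rfl⟩ := List.mem_map.mp hd
    exact ⟨p.1, ih p.1 p.2⟩
  | ex A φ ih => exact fun c => .ex (ih c)

theorem fullCover (φ : Formula S Γ) : PV T φ (.disj φ.Idx φ.canon) := by
  induction φ with
  | rel R a => exact disj_intro' ((Formula.rel R a).canon) PUnit.unit
  | eq t u => exact disj_intro' ((Formula.eq t u).canon) PUnit.unit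
  | @true Γ' => exact disj_intro' ((Formula.true (Γ := Γ')).canon) PUnit.unit
  | @false Γ' => exact disj_intro' ((Formula.false (Γ := Γ')).canon) PUnit.unit
  | conj φ ψ ih₁ ih₂ =>
    refine (conj_mono ih₁ ih₂).trans ((Provable.distrib trivial _ _).cut (disj_elim' fun b => ?_))
    refine conj_comm.trans ((Provable.distrib trivial _ _).cut (disj_elim' fun a => ?_))
    exact conj_comm.trans (disj_intro' ((Formula.conj φ ψ).canon) (a, b))
  | disj I f ih =>
    refine disj_elim' fun i => (ih i).trans (disj_elim' fun c => ?_)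
    exact PV.trans (or2_inl (ψ := Formula.false)) (disj_intro' ((Formula.disj I f).canon) [⟨i, c⟩])
  | ex A φ ih =>
    refine Provable.exAdj₁ (ih.trans (disj_elim' fun c => ?_))
    exact to_ex_subst_wk.trans (Provable.subst (Subst.wk A) (disj_intro' ((Formula.ex A φ).canon) c))

end Cover

section Main
variable {S : GeomSignature.{u}}

theorem provable_replace {Adm : Type u → Prop} {T₁ T₂ : GeomTheory S}
    (hax : ∀ a ∈ T₁, Provable Adm T₂ a) {s : GeomSequent S}
    (h : Provable Adm T₁ s) : Provable Adm T₂ s := by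
  induction h with
  | ax hs => exact hax _ hs
  | id φ => exact .id φ
  | cut _ _ ih₁ ih₂ => exact .cut ih₁ ih₂
  | subst σ _ ih => exact .subst σ ih
  | trueIntro φ => exact .trueIntro φ
  | falseElim φ => exact .falseElim φ
  | conjIntro _ _ ih₁ ih₂ => exact .conjIntro ih₁ ih₂
  | conjElimL φ ψ => exact .conjElimL φ ψ
  | conjElimR φ ψ => exact .conjElimR φ ψ
  | disjIntro hI f i => exact .disjIntro hI f i
  | disjElim hI _ ih => exact .disjElim hI ih
  | distrib hI φ ψ => exact .distrib hI φ ψ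
  | exAdj₁ _ ih => exact .exAdj₁ ih
  | exAdj₂ _ ih => exact .exAdj₂ ih
  | frobenius φ ψ => exact .frobenius φ ψ
  | eqRefl t => exact .eqRefl t
  | eqSubst t u φ => exact .eqSubst t u φ

end Main

/-- A geometric theory `T` is syntactically equivalent to a coherent theory iff for
every coherent formula `φ` and every family `ψᵢ` of geometric formulas in the same
context, the provability of `φ ⊢ ⋁ᵢ ψᵢ` in `T` implies that of `φ ⊢ ⋁_{i ∈ I'} ψᵢ`
for some finite subset `I'`. -/
theorem coherent_iff_compactness {S : GeomSignature.{u}} (T : GeomTheory S) :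
    (∃ T' : GeomTheory S, T'.IsCoherent ∧
      ∀ σ : GeomSequent S, GeomProvable T σ ↔ GeomProvable T' σ) ↔
    (∀ (Γ : Ctx S) (φ : Formula S Γ), φ.IsCoherent →
      ∀ (I : Type u) (ψ : I → Formula S Γ),
        GeomProvable T ⟨Γ, φ, .disj I ψ⟩ →
        ∃ I' : Finset I,
          GeomProvable T ⟨Γ, φ, .disj {i : I // i ∈ I'} (fun i => ψ i.1)⟩) := by
  constructor
  · rintro ⟨T', hT', hiff⟩ Γ φ hφ I ψ h
    obtain ⟨J, hJ⟩ := coherent_compactness hT' hφ ((hiff _).1 h)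
    exact ⟨J, (hiff _).2 hJ⟩
  · intro hcomp
    refine ⟨{s | s.IsCoherent ∧ GeomProvable T s}, fun s hs => hs.1, fun σ => ⟨?_, ?_⟩⟩
    · intro h
      refine provable_replace ?_ h
      rintro ⟨Γ, φ, ψ⟩ ha
      show PV {s | s.IsCoherent ∧ GeomProvable T s} φ ψ
      refine (fullCover φ).trans (disj_elim' fun c => ?_)
      have h1 : PV T (φ.canon c) (.disj ψ.Idx ψ.canon) :=
        ((canon_approx φ c).sound.trans (Provable.ax ha)).trans (fullCover ψ)
      obtain ⟨J, hJ⟩ := hcomp Γ (φ.canon c) (canon_approx φ c).coherent ψ.Idx ψ.canon h1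
      have hmem : (⟨Γ, φ.canon c, .disj {d // d ∈ J} fun d => ψ.canon d.1⟩ : GeomSequent S) ∈
          {s : GeomSequent S | s.IsCoherent ∧ GeomProvable T s} :=
        ⟨⟨(canon_approx φ c).coherent,
          Formula.IsCoherent.disj inferInstance (fun d => (canon_approx ψ d.1).coherent)⟩, hJ⟩
      exact (Provable.ax hmem).cut (disj_elim' fun d => (canon_approx ψ d.1).sound)
    · exact fun h => provable_replace (fun a ha => ha.2) h
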